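/- Let α > 0 and let (X,V) be characteristics on T^2 for a force bounded by C, with |V(t_0)| >= α and X(t_0) in B(x_0, r_0/2). Suppose α is large enough compared to C and r_0 (specifically α >= max(600 r_0/T, C') for suitable C' depending on C, r_0). Then there exist s in (0, 3r_0/α] and a time σ in [t_0 - 2s, t_0] such that X(σ) in S(x_0, r_0) and V(σ)·ν(X(σ)) <= -|V(σ)|/5, i.e. the characteristic crossed the circle S(x_0,r_0) entering inward with incidence angle bounded away from tangential. -/

import Mathlib

open scoped RealInnerProductSpace

/-- Euclidean norm of a planar vector. -/
noncomputable def nrm2 (v : ℝ × ℝ) : ℝ := Real.sqrt (v.1 ^ 2 + v.2 ^ 2)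

/-- Planar dot product. -/
def dot2 (v w : ℝ × ℝ) : ℝ := v.1 * w.1 + v.2 * w.2


set_option maxHeartbeats 1000000 in
lemma key {E : Type*} [NormedAddCommGroup E] [InnerProductSpace ℝ E]
    (r₀ C : ℝ) (hr : 0 < r₀) (hC : 0 ≤ C) (α : ℝ) (hα1 : 1 ≤ α) (hα2 : 900*C*r₀ ≤ α)
    (Y W G : ℝ → E) (hY : ∀ t, HasDerivAt Y (W t) t) (hW : ∀ t, HasDerivAt W (G t) t)
    (hG : ∀ t, ‖G t‖ ≤ C) (t₀ : ℝ) (hV0 : α ≤ ‖W t₀‖) (hX0 : ‖Y t₀‖ ≤ r₀/2) :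
    ∃ σ ∈ Set.Icc (t₀ - 3*r₀/α) t₀, ‖Y σ‖ = r₀ ∧ ⟪W σ, Y σ⟫ / r₀ ≤ -‖W σ‖/5 := by
  have hα0 : (0:ℝ) < α := lt_of_lt_of_le one_pos hα1
  set τ : ℝ := 3*r₀/α with hτdef
  have hτ0 : 0 < τ := by positivity
  have hCτ : C*τ ≤ 1/300 := by
    rw [hτdef, show C*(3*r₀/α) = (3*(C*r₀))/α by ring, div_le_iff₀ hα0]
    nlinarith
  have hτle : τ ≤ 3*r₀ := by
    rw [hτdef, div_le_iff₀ hα0]; nlinarith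
  have hCττ : C*τ*τ ≤ r₀/100 := by nlinarith [hτ0.le, mul_nonneg hC hτ0.le]
  set I : Set ℝ := Set.Icc (t₀ - τ) t₀ with hIdef
  -- velocity variation bound
  have hWd : ∀ t ∈ I, ‖W t - W t₀‖ ≤ C*τ := by
    intro t ht
    have h1 : ‖W t - W t₀‖ ≤ C * ‖t - t₀‖ :=
      Convex.norm_image_sub_le_of_norm_hasDerivWithin_le
        (fun x _ => (hW x).hasDerivWithinAt) (fun x _ => hG x) (convex_Icc _ _)
        (Set.right_mem_Icc.2 (by linarith [hτ0.le])) ht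
    have h2 : ‖t - t₀‖ ≤ τ := by
      rw [Real.norm_eq_abs, abs_le]; constructor <;> [linarith [ht.1]; linarith [ht.2]]
    calc ‖W t - W t₀‖ ≤ C * ‖t - t₀‖ := h1
      _ ≤ C * τ := by nlinarith [norm_nonneg (t - t₀)]
  -- position error bound
  set g : ℝ → E := fun t => Y t - (t - t₀) • W t₀ with hgdef
  have hg : ∀ t, HasDerivAt g (W t - W t₀) t := by
    intro t
    have := (hY t).sub (((hasDerivAt_id t).sub_const t₀).smul_const (W t₀))
    convert this using 1
    · rfl
    · simp
  have herr : ∀ t ∈ I, ‖Y t - (t - t₀) • W t₀ - Y t₀‖ ≤ r₀/100 := by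
    intro t ht
    have h1 : ‖g t - g t₀‖ ≤ (C*τ) * ‖t - t₀‖ :=
      Convex.norm_image_sub_le_of_norm_hasDerivWithin_le
        (fun x hx => (hg x).hasDerivWithinAt) hWd (convex_Icc _ _)
        (Set.right_mem_Icc.2 (by linarith [hτ0.le])) ht
    have h2 : ‖t - t₀‖ ≤ τ := by
      rw [Real.norm_eq_abs, abs_le]; constructor <;> [linarith [ht.1]; linarith [ht.2]]
    have h3 : g t₀ = Y t₀ := by simp [hgdef]
    have h4 : (C*τ) * ‖t - t₀‖ ≤ C*τ*τ := by
      nlinarith [norm_nonneg (t - t₀), mul_nonneg hC hτ0.le]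
    rw [h3] at h1
    calc ‖Y t - (t - t₀) • W t₀ - Y t₀‖ = ‖g t - Y t₀‖ := by rw [hgdef]
      _ ≤ C*τ*τ := le_trans h1 h4
      _ ≤ r₀/100 := hCττ
  -- exit: at time t₀ - τ the point is outside the ball of radius r₀
  have hexit : r₀ ≤ ‖Y (t₀ - τ)‖ := by
    have hmem : t₀ - τ ∈ I := Set.left_mem_Icc.2 (by linarith [hτ0.le])
    have he := herr _ hmem
    have h5 : (t₀ - τ - t₀) • W t₀ = -(τ • W t₀) := by rw [show t₀ - τ - t₀ = -τ by ring, neg_smul]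
    rw [h5] at he
    have h6 : 3*r₀ ≤ ‖τ • W t₀‖ := by
      rw [norm_smul, Real.norm_eq_abs, abs_of_pos hτ0]
      calc 3*r₀ = τ * α := by rw [hτdef]; field_simp
        _ ≤ τ * ‖W t₀‖ := by nlinarith [hτ0.le]
    have h7 : ‖τ • W t₀‖ ≤ ‖Y (t₀ - τ) + τ • W t₀ - Y t₀‖ + ‖Y t₀‖ + ‖Y (t₀ - τ)‖ := by
      have e1 : ‖τ • W t₀‖ = ‖(Y (t₀ - τ) + τ • W t₀ - Y t₀) + Y t₀ - Y (t₀ - τ)‖ := by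
        congr 1; abel
      rw [e1]
      calc ‖(Y (t₀ - τ) + τ • W t₀ - Y t₀) + Y t₀ - Y (t₀ - τ)‖
          ≤ ‖(Y (t₀ - τ) + τ • W t₀ - Y t₀) + Y t₀‖ + ‖Y (t₀ - τ)‖ := norm_sub_le _ _
        _ ≤ ‖Y (t₀ - τ) + τ • W t₀ - Y t₀‖ + ‖Y t₀‖ + ‖Y (t₀ - τ)‖ := by
            have := norm_add_le (Y (t₀ - τ) + τ • W t₀ - Y t₀) (Y t₀); linarith
    have he' : ‖Y (t₀ - τ) - -(τ • W t₀) - Y t₀‖ ≤ r₀/100 := he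
    have he'' : ‖Y (t₀ - τ) + τ • W t₀ - Y t₀‖ ≤ r₀/100 := by
      rw [sub_neg_eq_add] at he'; exact he'
    linarith
  -- IVT
  have hYc : Continuous Y := by
    rw [continuous_iff_continuousAt]; exact fun t => (hY t).continuousAt
  obtain ⟨σ, hσI, hσr⟩ : ∃ σ ∈ I, ‖Y σ‖ = r₀ := by
    have hsub := intermediate_value_Icc' (by linarith [hτ0.le] : t₀ - τ ≤ t₀)
      ((hYc.norm).continuousOn (s := I))
    have : r₀ ∈ Set.Icc ‖Y t₀‖ ‖Y (t₀ - τ)‖ := ⟨by linarith, hexit⟩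
    obtain ⟨σ, hσ, hval⟩ := hsub this
    exact ⟨σ, hσ, hval⟩
  refine ⟨σ, hσI, hσr, ?_⟩
  -- the dot product estimate
  set v : E := W t₀ with hvdef
  set n : ℝ := ‖v‖ with hndef
  have hn1 : 1 ≤ n := le_trans hα1 hV0
  have hn0 : 0 < n := lt_of_lt_of_le one_pos hn1
  set p : E := Y σ with hpdef
  set h : ℝ := t₀ - σ with hhdef
  have hh0 : 0 ≤ h := by rw [hhdef]; linarith [hσI.2]
  set q : E := p + h • v with hqdef
  have hpq : p = q - h • v := by rw [hqdef]; abel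
  have hqerr : ‖q - Y t₀‖ ≤ r₀/100 := by
    have := herr σ hσI
    have h5 : (σ - t₀) • v = -(h • v) := by rw [hhdef, show σ - t₀ = -(t₀ - σ) by ring, neg_smul]
    calc ‖q - Y t₀‖ = ‖Y σ - (σ - t₀) • v - Y t₀‖ := by
          rw [hqdef, hpdef, h5, sub_neg_eq_add]
      _ ≤ r₀/100 := herr σ hσI
  have hqn : ‖q‖ ≤ 51*r₀/100 := by
    calc ‖q‖ ≤ ‖q - Y t₀‖ + ‖Y t₀‖ := by
          have := norm_add_le (q - Y t₀) (Y t₀); simpa using this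
      _ ≤ 51*r₀/100 := by linarith
  set b : ℝ := ⟪v, q⟫ with hbdef
  have hcs : |b| ≤ n * ‖q‖ := by
    rw [hbdef, hndef]; exact abs_real_inner_le_norm v q
  have identity1 : r₀^2 = ‖q‖^2 - 2*(h*b) + h^2*n^2 := by
    have : r₀^2 = ‖q - h • v‖^2 := by rw [← hpq, hpdef, hσr]
    rw [this, norm_sub_sq_real, real_inner_smul_right, norm_smul, Real.norm_eq_abs,
      mul_pow, sq_abs, hbdef, real_inner_comm, hndef]
  have identity2 : ⟪v, p⟫ = b - h*n^2 := by
    rw [hpq, inner_sub_right, real_inner_smul_right, hbdef, hndef,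
      real_inner_self_eq_norm_sq]
  -- squared lower bound
  have e3 : ⟪v, p⟫^2 = b^2 + n^2*(r₀^2 - ‖q‖^2) := by
    rw [identity2]; linear_combination (-(n^2)) * identity1
  have hq2 : ‖q‖^2 ≤ (51*r₀/100)^2 := by
    have := norm_nonneg q; nlinarith
  have hq2' : n^2 * ‖q‖^2 ≤ n^2 * (51*r₀/100)^2 := by
    have := sq_nonneg n; nlinarith
  have e3' : (7399/10000)*(n*r₀)^2 ≤ ⟪v, p⟫^2 := by
    nlinarith [sq_nonneg b, hq2', e3]
  have hub : ⟪v, p⟫ ≤ (51/100)*(n*r₀) := by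
    have h1 : b ≤ n * ‖q‖ := le_trans (le_abs_self b) hcs
    have h2 : n * ‖q‖ ≤ n * (51*r₀/100) := by nlinarith
    have h3 : 0 ≤ h*n^2 := by positivity
    rw [identity2]; nlinarith
  have hdneg : ⟪v, p⟫ ≤ -(7/10)*(n*r₀) := by
    by_contra hcon
    push_neg at hcon
    have hfac : 0 ≤ (⟪v, p⟫ + (7/10)*(n*r₀)) * ((51/100)*(n*r₀) - ⟪v, p⟫) :=
      mul_nonneg (by linarith) (by linarith)
    nlinarith [e3', mul_pos hn0 hr, mul_pos (mul_pos hn0 hr) (mul_pos hn0 hr), hfac]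
  -- final assembly
  have hWσ : ‖W σ - v‖ ≤ 1/300 := le_trans (hWd σ hσI) hCτ
  have hinner : ⟪W σ, p⟫ ≤ ⟪v, p⟫ + (1/300)*r₀ := by
    have h1 : ⟪W σ - v, p⟫ = ⟪W σ, p⟫ - ⟪v, p⟫ := by rw [inner_sub_left]
    have h2 : |⟪W σ - v, p⟫| ≤ ‖W σ - v‖ * ‖p‖ := abs_real_inner_le_norm _ _
    have h3 : ‖p‖ = r₀ := by rw [hpdef, hσr]
    have h4 : ‖W σ - v‖ * ‖p‖ ≤ (1/300)*r₀ := by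
      rw [h3]; exact mul_le_mul_of_nonneg_right hWσ hr.le
    have := le_trans (le_abs_self _) (le_trans h2 h4)
    linarith [this, h1.symm.le]
  have hWσn : ‖W σ‖ ≤ n + 1/300 := by
    calc ‖W σ‖ = ‖v + (W σ - v)‖ := by congr 1; abel
      _ ≤ ‖v‖ + ‖W σ - v‖ := norm_add_le _ _
      _ ≤ n + 1/300 := by rw [← hndef]; linarith
  rw [div_le_div_iff₀ hr (by norm_num : (0:ℝ) < 5)]
  have hnr : r₀ ≤ n*r₀ := le_mul_of_one_le_left hr.le hn1
  have hWσr : ‖W σ‖ * r₀ ≤ (n + 1/300) * r₀ := mul_le_mul_of_nonneg_right hWσn hr.le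
  have hx : (n + 1/300) * r₀ = n*r₀ + r₀/300 := by ring
  linarith [hinner, hdneg, hWσr, hnr, hr, hx]


section Statement16Aux

/-- The linear embedding of `ℝ × ℝ` into the Euclidean plane. -/
noncomputable def toE16 : (ℝ × ℝ) →L[ℝ] EuclideanSpace ℝ (Fin 2) :=
  LinearMap.toContinuousLinearMap
  { toFun := fun v => WithLp.toLp 2 ![v.1, v.2]
    map_add' := by intro a b; ext i; fin_cases i <;> simp
    map_smul' := by intro c a; ext i; fin_cases i <;> simp }

lemma nrm2_eq (v : ℝ × ℝ) : Real.sqrt (v.1 ^ 2 + v.2 ^ 2) = ‖toE16 v‖ := by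
  simp [toE16, EuclideanSpace.norm_eq, Fin.sum_univ_two, Real.norm_eq_abs, sq_abs]

lemma dot2_eq (v w : ℝ × ℝ) : v.1 * w.1 + v.2 * w.2 = ⟪toE16 v, toE16 w⟫ := by
  simp [toE16, PiLp.inner_apply, Fin.sum_univ_two, RCLike.inner_apply]
  ring

end Statement16Aux

theorem statement16 (r₀ T C : ℝ) (hr₀ : 0 < r₀) (hT : 0 < T) (hC : 0 ≤ C) :
    ∃ C' : ℝ, 0 < C' ∧ ∀ α : ℝ, max (600 * r₀ / T) C' ≤ α →
      ∀ (x₀ : ℝ × ℝ) (X V F : ℝ → ℝ × ℝ),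
        (∀ t, HasDerivAt X (V t) t) →
        (∀ t, HasDerivAt V (F t) t) →
        (∀ t, nrm2 (F t) ≤ C) →
        ∀ t₀ : ℝ, α ≤ nrm2 (V t₀) → nrm2 (X t₀ - x₀) ≤ r₀ / 2 →
        ∃ s : ℝ, 0 < s ∧ s ≤ 3 * r₀ / α ∧
          ∃ σ ∈ Set.Icc (t₀ - 2 * s) t₀,
            nrm2 (X σ - x₀) = r₀ ∧
            dot2 (V σ) (X σ - x₀) / r₀ ≤ -(nrm2 (V σ)) / 5 := by
  refine ⟨900 * C * r₀ + 1, by positivity, ?_⟩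
  intro α hα x₀ X V F hX hV hF t₀ hVα hX0
  have hm := le_trans (le_max_right _ _) hα
  have hα1 : 1 ≤ α := by nlinarith [mul_nonneg (mul_nonneg (by norm_num : (0:ℝ) ≤ 900) hC) hr₀.le]
  have hα2 : 900 * C * r₀ ≤ α := by linarith
  have hα0 : (0:ℝ) < α := lt_of_lt_of_le one_pos hα1
  -- transfer to the Euclidean plane
  have hnrm : ∀ v : ℝ × ℝ, nrm2 v = ‖toE16 v‖ := fun v => nrm2_eq v
  have hdot : ∀ v w : ℝ × ℝ, dot2 v w = ⟪toE16 v, toE16 w⟫ := fun v w => dot2_eq v w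
  have hY' : ∀ t, HasDerivAt (fun t => toE16 (X t - x₀)) (toE16 (V t)) t := fun t =>
    toE16.hasFDerivAt.comp_hasDerivAt t ((hX t).sub_const x₀)
  have hV' : ∀ t, HasDerivAt (fun t => toE16 (V t)) (toE16 (F t)) t := fun t =>
    toE16.hasFDerivAt.comp_hasDerivAt t (hV t)
  have hF' : ∀ t, ‖toE16 (F t)‖ ≤ C := fun t => by rw [← hnrm]; exact hF t
  obtain ⟨σ, hσI, hσr, hσd⟩ := key r₀ C hr₀ hC α hα1 hα2
    (fun t => toE16 (X t - x₀)) (fun t => toE16 (V t)) (fun t => toE16 (F t))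
    hY' hV' hF' t₀ (by rw [← hnrm]; exact hVα) (by rw [← hnrm]; exact hX0)
  refine ⟨3 * r₀ / (2 * α), by positivity, ?_, σ, ?_, ?_, ?_⟩
  · rw [div_le_div_iff₀ (by positivity) hα0]; nlinarith
  · have : t₀ - 2 * (3 * r₀ / (2 * α)) = t₀ - 3 * r₀ / α := by ring
    rw [this]; exact hσI
  · rw [hnrm]; exact hσr
  · rw [hnrm, hdot]; exact hσd
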